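/- For any finite Coxeter group W with simple reflections S and any conjugacy class C of W that is not elliptic, every element of C of minimal length in C lies in some proper standard parabolic subgroup W_J, J ⊊ S. -/

import Mathlib

open List

namespace CoxGP

open scoped Classical

variable {B : Type*} {W : Type*} [Group W] {M : CoxeterMatrix B} (cs : CoxeterSystem M W)

local prefix:100 "σ" => cs.simple
local prefix:100 "π" => cs.wordProd
local prefix:100 "ℒ" => cs.length
local prefix:100 "ρis" => cs.rightInvSeq

lemma conj_eq_iff (a t r : W) : a * t * a⁻¹ = r ↔ t = a⁻¹ * r * a := by
  constructor
  · rintro rfl; group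
  · rintro rfl; group

lemma simple_conj_simple_iff (i : B) (t : W) : σ i * t * σ i = σ i ↔ t = σ i := by
  have h3 : ∀ u : W, σ i * (σ i * u * σ i) * σ i = u := by
    intro u
    simp [mul_assoc, cs.simple_mul_simple_cancel_left, cs.simple_mul_simple_self]
  constructor
  · intro h
    have h2 := congrArg (fun x => σ i * x * σ i) h
    rw [h3] at h2
    rw [cs.simple_mul_simple_self, one_mul] at h2
    exact h2
  · rintro rfl
    simp [mul_assoc, cs.simple_mul_simple_self]

/-- The parity permutation associated to a simple reflection. -/
noncomputable def phi (i : B) : Equiv.Perm (W × ZMod 2) where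
  toFun x := (σ i * x.1 * σ i, x.2 + if x.1 = σ i then 1 else 0)
  invFun x := (σ i * x.1 * σ i, x.2 + if x.1 = σ i then 1 else 0)
  left_inv := by
    rintro ⟨t, ε⟩
    have h1 : σ i * (σ i * t * σ i) * σ i = t := by
      simp [mul_assoc, cs.simple_mul_simple_cancel_left, cs.simple_mul_simple_self]
    refine Prod.ext h1 ?_
    simp only [simple_conj_simple_iff]
    rcases eq_or_ne t (σ i) with h | h
    · simp only [if_pos h, add_assoc]
      have h2 : (1 : ZMod 2) + 1 = 0 := by decide
      rw [h2, add_zero]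
    · simp [if_neg h]
  right_inv := by
    rintro ⟨t, ε⟩
    have h1 : σ i * (σ i * t * σ i) * σ i = t := by
      simp [mul_assoc, cs.simple_mul_simple_cancel_left, cs.simple_mul_simple_self]
    refine Prod.ext h1 ?_
    simp only [simple_conj_simple_iff]
    rcases eq_or_ne t (σ i) with h | h
    · simp only [if_pos h, add_assoc]
      have h2 : (1 : ZMod 2) + 1 = 0 := by decide
      rw [h2, add_zero]
    · simp [if_neg h]

lemma phi_apply (i : B) (t : W) (ε : ZMod 2) :
    phi cs i (t, ε) = (σ i * t * σ i, ε + if t = σ i then 1 else 0) := rfl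

lemma phi2_apply (i j : B) (t : W) (ε : ZMod 2) :
    (phi cs i * phi cs j) (t, ε) =
      ((σ i * σ j) * t * (σ i * σ j)⁻¹,
        ε + (if t = σ j then 1 else 0)
          + (if t = (σ i * σ j)⁻¹ * σ j then 1 else 0)) := by
  have hinv : (σ i * σ j)⁻¹ = σ j * σ i := by
    rw [mul_inv_rev, cs.inv_simple, cs.inv_simple]
  rw [Equiv.Perm.mul_apply, phi_apply, phi_apply]
  have hfst : σ i * (σ j * t * σ j) * σ i = (σ i * σ j) * t * (σ i * σ j)⁻¹ := by
    rw [hinv]; group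
  refine Prod.ext hfst ?_
  simp only
  have hcond : (σ j * t * σ j = σ i) ↔ (t = (σ i * σ j)⁻¹ * σ j) := by
    rw [hinv]
    constructor
    · intro h
      have h2 := congrArg (fun x => σ j * x * σ j) h
      have h3 : σ j * (σ j * t * σ j) * σ j = t := by
        simp [mul_assoc, cs.simple_mul_simple_cancel_left, cs.simple_mul_simple_self]
      rw [h3] at h2
      exact h2
    · rintro rfl
      simp [mul_assoc, cs.simple_mul_simple_cancel_left, cs.simple_mul_simple_self]
  rw [hcond, add_assoc]

lemma sigma_mul_pow (i j : B) (k : ℕ) :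
    σ j * (σ i * σ j) ^ k = ((σ i * σ j)⁻¹) ^ k * σ j := by
  induction k with
  | zero => simp
  | succ k ih =>
    have hstep : σ j * (σ i * σ j) = (σ i * σ j)⁻¹ * σ j := by
      rw [mul_inv_rev, cs.inv_simple, cs.inv_simple]; group
    rw [pow_succ, ← mul_assoc, ih, mul_assoc, hstep, pow_succ]
    group

lemma conj_pow_sigma (i j : B) (k : ℕ) :
    ((σ i * σ j) ^ k)⁻¹ * σ j * (σ i * σ j) ^ k = ((σ i * σ j)⁻¹) ^ (2 * k) * σ j := by
  rw [mul_assoc, sigma_mul_pow, ← inv_pow, ← mul_assoc, ← pow_add, two_mul]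


lemma conj_pow_sigma' (i j : B) (k : ℕ) :
    ((σ i * σ j) ^ k)⁻¹ * ((σ i * σ j)⁻¹ * σ j) * (σ i * σ j) ^ k
      = ((σ i * σ j)⁻¹) ^ (2 * k + 1) * σ j := by
  have h0 : ((σ i * σ j) ^ k)⁻¹ * ((σ i * σ j)⁻¹ * σ j) * (σ i * σ j) ^ k
      = ((σ i * σ j) ^ k)⁻¹ * (σ i * σ j)⁻¹ * (σ j * (σ i * σ j) ^ k) := by group
  rw [h0, sigma_mul_pow, ← inv_pow]
  rw [show 2 * k + 1 = (k + 1) + k by omega, pow_add, pow_succ]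
  simp [mul_assoc]

lemma phi_mul_phi_pow (i j : B) (m : ℕ) (t : W) (ε : ZMod 2) :
    ((phi cs i * phi cs j) ^ m) (t, ε) =
      ((σ i * σ j) ^ m * t * ((σ i * σ j) ^ m)⁻¹,
        ε + ∑ r ∈ Finset.range (2 * m), if t = ((σ i * σ j)⁻¹) ^ r * σ j then 1 else 0) := by
  induction m generalizing t ε with
  | zero => simp
  | succ m ih =>
    rw [pow_succ', Equiv.Perm.mul_apply, ih, phi2_apply]
    set p := σ i * σ j with hp
    have hfst : p * (p ^ m * t * (p ^ m)⁻¹) * p⁻¹ = p ^ (m+1) * t * (p ^ (m+1))⁻¹ := by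
      rw [pow_succ']
      group
    refine Prod.ext hfst ?_
    simp only
    have hc1 : (p ^ m * t * (p ^ m)⁻¹ = σ j) ↔ (t = (p⁻¹) ^ (2 * m) * σ j) := by
      rw [conj_eq_iff, conj_pow_sigma]
    have hc2 : (p ^ m * t * (p ^ m)⁻¹ = p⁻¹ * σ j) ↔ (t = (p⁻¹) ^ (2 * m + 1) * σ j) := by
      rw [conj_eq_iff, conj_pow_sigma']
    simp only [hc1, hc2]
    have harith : 2 * (m + 1) = (2 * m + 1) + 1 := by omega
    rw [harith, Finset.sum_range_succ, Finset.sum_range_succ]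
    ring

lemma isLiftable : M.IsLiftable (fun i => (phi cs i : Equiv.Perm (W × ZMod 2))) := by
  intro i j
  apply Equiv.ext
  rintro ⟨t, ε⟩
  rw [Equiv.Perm.one_apply, phi_mul_phi_pow]
  have hrel : (σ i * σ j) ^ M i j = 1 := cs.simple_mul_simple_pow i j
  have hrel' : ((σ i * σ j)⁻¹) ^ M i j = 1 := by
    rw [inv_pow, hrel, inv_one]
  have hsum : ∑ r ∈ Finset.range (2 * M i j),
      (if t = ((σ i * σ j)⁻¹) ^ r * σ j then (1 : ZMod 2) else 0) = 0 := by
    rw [two_mul, Finset.sum_range_add]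
    have heq : ∀ r, ((σ i * σ j)⁻¹) ^ (M i j + r) = ((σ i * σ j)⁻¹) ^ r := by
      intro r
      rw [pow_add, hrel', one_mul]
    have : ∀ r ∈ Finset.range (M i j),
        (if t = ((σ i * σ j)⁻¹) ^ (M i j + r) * σ j then (1 : ZMod 2) else 0)
        = (if t = ((σ i * σ j)⁻¹) ^ r * σ j then (1 : ZMod 2) else 0) := by
      intro r _
      rw [heq]
    rw [Finset.sum_congr rfl this]
    have h2 : ∀ x : ZMod 2, x + x = 0 := by decide
    exact h2 _
  rw [hrel, hsum]
  simp

/-- The parity representation of the Coxeter group. -/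
noncomputable def rho : W →* Equiv.Perm (W × ZMod 2) :=
  cs.lift ⟨fun i => phi cs i, isLiftable cs⟩

lemma rho_simple (i : B) : rho cs (σ i) = phi cs i :=
  cs.lift_apply_simple (isLiftable cs) i

lemma rho_wordProd (ω : List B) (t : W) (ε : ZMod 2) :
    rho cs (π ω) (t, ε) = (π ω * t * (π ω)⁻¹, ε + ((ρis ω).count t : ZMod 2)) := by
  induction ω generalizing t ε with
  | nil => simp
  | cons i ω ih =>
    rw [cs.wordProd_cons, map_mul, Equiv.Perm.mul_apply, ih, rho_simple, phi_apply]
    have hris : ρis (i :: ω) = ((π ω)⁻¹ * σ i * π ω) :: ρis ω := rfl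
    have hfst : σ i * (π ω * t * (π ω)⁻¹) * σ i
        = (σ i * π ω) * t * (σ i * π ω)⁻¹ := by
      rw [mul_inv_rev, cs.inv_simple]; group
    refine Prod.ext hfst ?_
    simp only
    have hcond : (π ω * t * (π ω)⁻¹ = σ i) ↔ (t = (π ω)⁻¹ * σ i * π ω) := by
      rw [conj_eq_iff]
    rw [hris, List.count_cons]
    simp only [hcond, beq_iff_eq]
    rcases eq_or_ne t ((π ω)⁻¹ * σ i * π ω) with h | h
    · rw [if_pos h, if_pos h.symm]
      push_cast
      ring
    · rw [if_neg h, if_neg (fun hc => h hc.symm)]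
      push_cast
      ring

/-- The parity of the number of times `t` occurs in the right inversion sequence
of any word for `w`. -/
noncomputable def nn (w t : W) : ZMod 2 := (rho cs w (t, 0)).2

lemma nn_wordProd (ω : List B) (t : W) : nn cs (π ω) t = ((ρis ω).count t : ZMod 2) := by
  rw [nn, rho_wordProd, zero_add]

lemma rho_apply (w t : W) (ε : ZMod 2) :
    rho cs w (t, ε) = (w * t * w⁻¹, ε + nn cs w t) := by
  obtain ⟨ω, rfl⟩ := cs.wordProd_surjective w
  rw [rho_wordProd, nn_wordProd]

lemma nn_one (t : W) : nn cs 1 t = 0 := by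
  have : (1 : W) = π [] := by simp
  rw [this, nn_wordProd]
  simp

lemma nn_mul (a b t : W) : nn cs (a * b) t = nn cs b t + nn cs a (b * t * b⁻¹) := by
  have h1 : rho cs (a * b) (t, 0) = rho cs a (rho cs b (t, 0)) := by
    rw [map_mul, Equiv.Perm.mul_apply]
  rw [nn, h1, rho_apply, rho_apply]
  simp

lemma nn_simple (i : B) (t : W) : nn cs (σ i) t = if t = σ i then 1 else 0 := by
  rw [nn, rho_simple, phi_apply, zero_add]

lemma zmod2_cases (x : ZMod 2) : x = 0 ∨ x = 1 := by revert x; decide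

lemma nn_inv_conj (w t : W) : nn cs w⁻¹ (w * t * w⁻¹) = nn cs w t := by
  have h := nn_mul cs w⁻¹ w t
  rw [inv_mul_cancel, nn_one] at h
  rcases zmod2_cases (nn cs w t) with h1 | h1 <;>
    rcases zmod2_cases (nn cs w⁻¹ (w * t * w⁻¹)) with h2 | h2 <;>
      rw [h1, h2] at h ⊢ <;> first | rfl | (exfalso; revert h; decide)

lemma nn_self_of_isReflection {t : W} (ht : cs.IsReflection t) : nn cs t t = 1 := by
  obtain ⟨v, i, rfl⟩ := ht
  set t := v * σ i * v⁻¹ with hdef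
  have h1 : nn cs t t = nn cs v⁻¹ t + nn cs (v * σ i) (v⁻¹ * t * v⁻¹⁻¹) := by
    have h : t = (v * σ i) * v⁻¹ := hdef
    nth_rewrite 1 [h]
    rw [nn_mul]
  have h2 : v⁻¹ * t * v⁻¹⁻¹ = σ i := by rw [hdef]; group
  have h4 : nn cs (v * σ i) (σ i) = nn cs (σ i) (σ i) + nn cs v (σ i * σ i * (σ i)⁻¹) := by
    rw [nn_mul]
  have h5 : σ i * σ i * (σ i)⁻¹ = σ i := by group
  have h6 : nn cs v⁻¹ t = nn cs v (σ i) := by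
    rw [hdef]; exact nn_inv_conj cs v (σ i)
  rw [h1, h2, h4, h5, h6, nn_simple, if_pos rfl]
  rcases zmod2_cases (nn cs v (σ i)) with h7 | h7 <;> rw [h7] <;> decide

/-- Strong exchange, parity form, forward direction. -/
lemma isRightInversion_of_nn_eq_one {t : W} (ht : cs.IsReflection t) {w : W}
    (h : nn cs w t = 1) : cs.IsRightInversion w t := by
  obtain ⟨ω, hred, rfl⟩ : ∃ ω, cs.IsReduced ω ∧ w = π ω := by
    obtain ⟨ω, h1, h2⟩ := cs.exists_reduced_word' w
    exact ⟨ω, h1, h2⟩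
  rw [nn_wordProd] at h
  have hmem : t ∈ ρis ω := by
    by_contra hmem
    rw [List.count_eq_zero.mpr hmem] at h
    revert h; decide
  exact cs.isRightInversion_of_mem_rightInvSeq hred hmem

/-- Strong exchange, parity form: for a reflection `t`,
`t` is a right inversion of `w` iff the parity is one. -/
lemma nn_eq_one_iff {t : W} (ht : cs.IsReflection t) (w : W) :
    nn cs w t = 1 ↔ cs.IsRightInversion w t := by
  constructor
  · exact isRightInversion_of_nn_eq_one cs ht
  · intro hinv
    rcases zmod2_cases (nn cs w t) with h0 | h1
    swap
    · exact h1
    exfalso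
    have hwt : nn cs (w * t) t = 1 := by
      have hm := nn_mul cs w t t
      have h2 : t * t * t⁻¹ = t := by
        rw [ht.mul_self, one_mul, ht.inv]
      rw [h2, nn_self_of_isReflection cs ht, h0] at hm
      rw [hm]
      decide
    have hi2 : cs.IsRightInversion (w * t) t := isRightInversion_of_nn_eq_one cs ht hwt
    have h3 : w * t * t = w := by rw [mul_assoc, ht.mul_self, mul_one]
    have h4 := hi2.2
    rw [h3] at h4
    exact Nat.lt_asymm hinv.2 h4

/-! ### Inversion sets and their cardinality -/

def invR (w : W) : Set W := {t | cs.IsRightInversion w t}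

lemma invR_eq_mem_ris {ω : List B} (hred : cs.IsReduced ω) :
    invR cs (π ω) = {t | t ∈ ρis ω} := by
  ext t
  constructor
  · intro h
    have h1 : nn cs (π ω) t = 1 := (nn_eq_one_iff cs h.1 (π ω)).mpr h
    rw [nn_wordProd] at h1
    by_contra hmem
    rw [List.count_eq_zero.mpr hmem] at h1
    revert h1; decide
  · intro h
    exact cs.isRightInversion_of_mem_rightInvSeq hred h

lemma ncard_invR (w : W) : (invR cs w).ncard = ℒ w := by
  obtain ⟨ω, hred, rfl⟩ : ∃ ω, cs.IsReduced ω ∧ w = π ω := by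
    obtain ⟨ω, h1, h2⟩ := cs.exists_reduced_word' w
    exact ⟨ω, h1, h2⟩
  rw [invR_eq_mem_ris cs hred]
  have h1 : {t | t ∈ ρis ω} = ((ρis ω).toFinset : Set W) := by
    ext t; simp
  rw [h1, Set.ncard_coe_finset, List.toFinset_card_of_nodup hred.nodup_rightInvSeq,
    cs.length_rightInvSeq]
  exact hred.symm

/-! ### Standard parabolic subgroups -/

def PI (I : Set B) : Subgroup W := Subgroup.closure (cs.simple '' I)

lemma wordProd_mem_PI {I : Set B} {ω : List B} (h : ∀ i ∈ ω, i ∈ I) :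
    π ω ∈ PI cs I := by
  induction ω with
  | nil => rw [cs.wordProd_nil]; exact one_mem _
  | cons i ω ih =>
    rw [cs.wordProd_cons]
    exact mul_mem (Subgroup.subset_closure ⟨i, h i (List.mem_cons_self), rfl⟩)
      (ih fun j hj => h j (List.mem_cons_of_mem i hj))

lemma exists_word_of_mem_PI {I : Set B} {v : W} (hv : v ∈ PI cs I) :
    ∃ ω : List B, (∀ i ∈ ω, i ∈ I) ∧ π ω = v := by
  induction hv using Subgroup.closure_induction with
  | mem x hx =>
    obtain ⟨i, hi, rfl⟩ := hx
    exact ⟨[i], by simpa using hi, by simp⟩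
  | one => exact ⟨[], by simp, by simp⟩
  | mul x y hx hy ihx ihy =>
    obtain ⟨ω₁, h1, rfl⟩ := ihx
    obtain ⟨ω₂, h2, rfl⟩ := ihy
    exact ⟨ω₁ ++ ω₂, by
      intro i hi
      rcases List.mem_append.mp hi with h | h
      exacts [h1 i h, h2 i h], by rw [cs.wordProd_append]⟩
  | inv x hx ihx =>
    obtain ⟨ω, h1, rfl⟩ := ihx
    exact ⟨ω.reverse, fun i hi => h1 i (List.mem_reverse.mp hi), by simp⟩

lemma exists_reduced_word_subset :
    ∀ n (ω : List B), ω.length ≤ n →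
      ∃ ω' : List B, cs.IsReduced ω' ∧ π ω' = π ω ∧ ∀ i ∈ ω', i ∈ ω := by
  intro n
  induction n with
  | zero =>
    intro ω hω
    rw [Nat.le_zero, List.length_eq_zero_iff] at hω
    subst hω
    exact ⟨[], by simp [CoxeterSystem.IsReduced], by simp, by simp⟩
  | succ n ih =>
    intro ω hω
    rcases List.eq_nil_or_concat ω with rfl | ⟨L, b, rfl⟩
    · exact ⟨[], by simp [CoxeterSystem.IsReduced], by simp, by simp⟩
    have hL : L.length ≤ n := by
      have := hω
      simp only [List.concat_eq_append, List.length_append] at this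
      simp at this
      omega
    obtain ⟨ω₀, hred₀, hprod₀, hsub₀⟩ := ih L hL
    rcases cs.length_mul_simple (π L) b with hup | hdown
    · have hmc : ∀ (l : List B) (a x : B), x ∈ l.concat a ↔ x ∈ l ∨ x = a := by
        intro l a x; simp [List.concat_eq_append]
      refine ⟨ω₀.concat b, ?_, ?_, ?_⟩
      · rw [CoxeterSystem.IsReduced, cs.wordProd_concat, List.length_concat, hprod₀, hup]
        have hl : ω₀.length = ℒ (π L) := by rw [← hprod₀]; exact hred₀.symm
        omega
      · rw [cs.wordProd_concat, cs.wordProd_concat, hprod₀]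
      · intro i hi
        rcases (hmc ω₀ b i).mp hi with h | h
        · exact (hmc L b i).mpr (Or.inl (hsub₀ i h))
        · exact (hmc L b i).mpr (Or.inr h)
    · -- descent: exchange
      have hlt : ℒ (π L * σ b) < ℒ (π L) := by omega
      have hinv : cs.IsRightInversion (π L) (σ b) := ⟨cs.isReflection_simple b, hlt⟩
      have hnn : nn cs (π L) (σ b) = 1 := (nn_eq_one_iff cs (cs.isReflection_simple b) _).mpr hinv
      rw [← hprod₀, nn_wordProd] at hnn
      have hmem : σ b ∈ ρis ω₀ := by
        by_contra hmem
        rw [List.count_eq_zero.mpr hmem] at hnn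
        revert hnn; decide
      obtain ⟨j, hj, hget⟩ := List.mem_iff_getElem.mp hmem
      have herase : π ω₀ * σ b = π (ω₀.eraseIdx j) := by
        have := cs.wordProd_mul_getD_rightInvSeq ω₀ j
        rwa [List.getD_eq_getElem _ 1 hj, hget] at this
      have hlen : (ω₀.eraseIdx j).length ≤ n := by
        have hj' : j < ω₀.length := by
          rw [cs.length_rightInvSeq] at hj
          exact hj
        have h1 := List.length_eraseIdx_add_one hj'
        have h2 : ω₀.length ≤ L.length := by
          have : ω₀.length = ℒ (π L) := by rw [← hprod₀]; exact hred₀.symm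
          rw [this]
          exact (hprod₀ ▸ cs.length_wordProd_le L)
        omega
      obtain ⟨ω', hred', hprod', hsub'⟩ := ih (ω₀.eraseIdx j) hlen
      refine ⟨ω', hred', ?_, ?_⟩
      · rw [hprod', ← herase, hprod₀, cs.wordProd_concat]
      · intro i hi
        have h1 : i ∈ ω₀.eraseIdx j := hsub' i hi
        have h2 : i ∈ ω₀ := (List.eraseIdx_sublist ω₀ j).subset h1
        have : i ∈ L := hsub₀ i h2
        simp [List.concat_eq_append]
        left; exact this

lemma exists_reduced_word_of_mem_PI {I : Set B} {v : W} (hv : v ∈ PI cs I) :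
    ∃ ω : List B, (∀ i ∈ ω, i ∈ I) ∧ cs.IsReduced ω ∧ π ω = v := by
  obtain ⟨ω, hsub, rfl⟩ := exists_word_of_mem_PI cs hv
  obtain ⟨ω', hred, hprod, hsub'⟩ := exists_reduced_word_subset cs ω.length ω le_rfl
  exact ⟨ω', fun i hi => hsub i (hsub' i hi), hred, hprod⟩

lemma mem_PI_of_mem_ris {I : Set B} {ω : List B} (h : ∀ i ∈ ω, i ∈ I) {t : W}
    (ht : t ∈ ρis ω) : t ∈ PI cs I := by
  induction ω with
  | nil => simp at ht
  | cons i ω ih =>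
    have hris : ρis (i :: ω) = ((π ω)⁻¹ * σ i * π ω) :: ρis ω := rfl
    rw [hris, List.mem_cons] at ht
    rcases ht with rfl | ht
    · have h1 : π ω ∈ PI cs I := wordProd_mem_PI cs fun j hj => h j (List.mem_cons_of_mem i hj)
      have h2 : σ i ∈ PI cs I :=
        Subgroup.subset_closure ⟨i, h i (List.mem_cons_self), rfl⟩
      exact mul_mem (mul_mem (inv_mem h1) h2) h1
    · exact ih (fun j hj => h j (List.mem_cons_of_mem i hj)) ht

lemma isRightInversion_mem_PI {I : Set B} {v : W} (hv : v ∈ PI cs I) {t : W}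
    (ht : cs.IsRightInversion v t) : t ∈ PI cs I := by
  obtain ⟨ω, hsub, hred, rfl⟩ := exists_reduced_word_of_mem_PI cs hv
  have : t ∈ ρis ω := by
    have h1 : t ∈ invR cs (π ω) := ht
    rw [invR_eq_mem_ris cs hred] at h1
    exact h1
  exact mem_PI_of_mem_ris cs hsub this

lemma isLeftInversion_mem_PI {I : Set B} {v : W} (hv : v ∈ PI cs I) {t : W}
    (ht : cs.IsLeftInversion v t) : t ∈ PI cs I :=
  isRightInversion_mem_PI cs (inv_mem hv) (cs.isRightInversion_inv_iff.mpr ht)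

/-! ### Left inversion sets -/

def NL (w : W) : Set W := {t | cs.IsLeftInversion w t}

lemma NL_eq_invR_inv (w : W) : NL cs w = invR cs w⁻¹ := by
  ext t
  exact (cs.isRightInversion_inv_iff (w := w) (t := t)).symm

lemma ncard_NL (w : W) : (NL cs w).ncard = ℒ w := by
  rw [NL_eq_invR_inv, ncard_invR, cs.length_inv]

lemma mem_NL_iff {w t : W} (ht : cs.IsReflection t) :
    t ∈ NL cs w ↔ nn cs w⁻¹ t = 1 := by
  rw [NL_eq_invR_inv]
  exact (nn_eq_one_iff cs ht w⁻¹).symm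

/-- Key support lemma : every element lies in the standard parabolic subgroup
generated by the simple reflections belonging to the subgroup generated
by its left inversions. -/
lemma mem_PI_support : ∀ n (c : W), ℒ c ≤ n →
    c ∈ PI cs {i | σ i ∈ Subgroup.closure (NL cs c)} := by
  intro n
  induction n with
  | zero =>
    intro c hc
    rw [Nat.le_zero, cs.length_eq_zero_iff] at hc
    subst hc
    exact one_mem _
  | succ n ih =>
    intro c hc
    rcases eq_or_ne c 1 with rfl | hne
    · exact one_mem _
    obtain ⟨i, hi⟩ := cs.exists_leftDescent_of_ne_one hne
    have hiNL : σ i ∈ NL cs c := (cs.isLeftInversion_simple_iff_isLeftDescent c i).mpr hi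
    set c₁ := σ i * c with hc₁
    have hlen : ℒ c₁ < ℒ c := hi
    have hc₁n : ℒ c₁ ≤ n := by omega
    have hind := ih c₁ hc₁n
    -- NL c₁ ⊆ {σ i} ∪ (σ i) (NL c) (σ i)
    have hNL : ∀ t ∈ NL cs c₁, t = σ i ∨ σ i * t * σ i ∈ NL cs c := by
      intro t ht
      have htr : cs.IsReflection t := ht.1
      rcases eq_or_ne t (σ i) with rfl | htne
      · exact Or.inl rfl
      · right
        have h1 : nn cs c₁⁻¹ t = 1 := (mem_NL_iff cs htr).mp ht
        have h2 : c₁⁻¹ = c⁻¹ * σ i := by rw [hc₁, mul_inv_rev, cs.inv_simple]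
        rw [h2, nn_mul, nn_simple, if_neg htne, zero_add] at h1
        have h3 : σ i * t * (σ i)⁻¹ = σ i * t * σ i := by rw [cs.inv_simple]
        rw [h3] at h1
        have h4 : cs.IsReflection (σ i * t * σ i) := by
          have := htr.conj (σ i)
          rwa [cs.inv_simple] at this
        exact (mem_NL_iff cs h4).mpr h1
    have hclos : Subgroup.closure (NL cs c₁) ≤ Subgroup.closure (NL cs c) := by
      rw [Subgroup.closure_le]
      intro t ht
      rcases hNL t ht with rfl | h
      · exact Subgroup.subset_closure hiNL
      · have h1 : σ i ∈ Subgroup.closure (NL cs c) := Subgroup.subset_closure hiNL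
        have h2 : σ i * t * σ i ∈ Subgroup.closure (NL cs c) := Subgroup.subset_closure h
        have h3 : σ i * (σ i * t * σ i) * σ i = t := by
          simp [mul_assoc, cs.simple_mul_simple_cancel_left, cs.simple_mul_simple_self]
        have h5 : σ i * (σ i * t * σ i) * σ i ∈ Subgroup.closure (NL cs c) :=
          mul_mem (mul_mem h1 h2) h1
        rwa [h3] at h5
    have hmono : PI cs {j | σ j ∈ Subgroup.closure (NL cs c₁)}
        ≤ PI cs {j | σ j ∈ Subgroup.closure (NL cs c)} := by
      apply Subgroup.closure_mono
      apply Set.image_mono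
      intro j hj
      exact hclos hj
    have hiJ : σ i ∈ cs.simple '' {j | σ j ∈ Subgroup.closure (NL cs c)} :=
      ⟨i, Subgroup.subset_closure hiNL, rfl⟩
    have hfin : σ i * c₁ ∈ PI cs {j | σ j ∈ Subgroup.closure (NL cs c)} :=
      mul_mem (Subgroup.subset_closure hiJ) (hmono hind)
    rw [hc₁, cs.simple_mul_simple_cancel_left] at hfin
    exact hfin

lemma finite_invR (w : W) : (invR cs w).Finite := by
  obtain ⟨ω, hred, rfl⟩ : ∃ ω, cs.IsReduced ω ∧ w = π ω := by
    obtain ⟨ω, h1, h2⟩ := cs.exists_reduced_word' w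
    exact ⟨ω, h1, h2⟩
  rw [invR_eq_mem_ris cs hred]
  exact (ρis ω).finite_toSet

lemma finite_NL (w : W) : (NL cs w).Finite := by
  rw [NL_eq_invR_inv]; exact finite_invR cs _

lemma length_mul_additive {I : Set B} {y : W}
    (hymin : ∀ r : W, r ∈ PI cs I → ¬ ℒ (y * r) < ℒ y)
    {r : W} (hr : r ∈ PI cs I) : ℒ (y * r) = ℒ y + ℒ r := by
  have hle := cs.length_mul_le y r
  set A := invR cs r with hA
  set Bs := (fun t => r⁻¹ * t * r) '' invR cs y with hB
  have hAP : ∀ t ∈ A, t ∈ PI cs I := fun t ht => isRightInversion_mem_PI cs hr ht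
  have hdisj : Disjoint A Bs := by
    rw [Set.disjoint_left]
    rintro t htA ⟨t₀, ht₀, rfl⟩
    have htP : r⁻¹ * t₀ * r ∈ PI cs I := hAP _ htA
    have ht₀P : t₀ ∈ PI cs I := by
      have h1 : r * (r⁻¹ * t₀ * r) * r⁻¹ ∈ PI cs I :=
        mul_mem (mul_mem hr htP) (inv_mem hr)
      have h2 : r * (r⁻¹ * t₀ * r) * r⁻¹ = t₀ := by group
      rwa [h2] at h1
    exact hymin t₀ ht₀P ht₀.2
  have hsub : A ∪ Bs ⊆ invR cs (y * r) := by
    rintro t (htA | ⟨t₀, ht₀, rfl⟩)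
    · have htrefl : cs.IsReflection t := htA.1
      have h1 : nn cs r t = 1 := (nn_eq_one_iff cs htrefl r).mpr htA
      have hrt : cs.IsReflection (r * t * r⁻¹) := htrefl.conj r
      have h2 : nn cs y (r * t * r⁻¹) = 0 := by
        rcases zmod2_cases (nn cs y (r * t * r⁻¹)) with h | h
        · exact h
        exfalso
        have hinv := isRightInversion_of_nn_eq_one cs hrt h
        have hmem : r * t * r⁻¹ ∈ PI cs I := mul_mem (mul_mem hr (hAP _ htA)) (inv_mem hr)
        exact hymin _ hmem hinv.2
      have h3 : nn cs (y * r) t = 1 := by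
        rw [nn_mul, h1, h2, add_zero]
      exact isRightInversion_of_nn_eq_one cs htrefl h3
    · have ht₀refl : cs.IsReflection t₀ := ht₀.1
      have htrefl : cs.IsReflection (r⁻¹ * t₀ * r) := by
        have := ht₀refl.conj r⁻¹
        rwa [inv_inv] at this
      have h1 : nn cs y (r * (r⁻¹ * t₀ * r) * r⁻¹) = 1 := by
        have he : r * (r⁻¹ * t₀ * r) * r⁻¹ = t₀ := by group
        rw [he]
        exact (nn_eq_one_iff cs ht₀refl y).mpr ht₀
      have h2 : nn cs r (r⁻¹ * t₀ * r) = 0 := by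
        rcases zmod2_cases (nn cs r (r⁻¹ * t₀ * r)) with h | h
        · exact h
        exfalso
        have hinv := isRightInversion_of_nn_eq_one cs htrefl h
        have hmem : r⁻¹ * t₀ * r ∈ PI cs I := isRightInversion_mem_PI cs hr hinv
        have ht₀P : t₀ ∈ PI cs I := by
          have hm : r * (r⁻¹ * t₀ * r) * r⁻¹ ∈ PI cs I :=
            mul_mem (mul_mem hr hmem) (inv_mem hr)
          have he : r * (r⁻¹ * t₀ * r) * r⁻¹ = t₀ := by group
          rwa [he] at hm
        exact hymin t₀ ht₀P ht₀.2
      have h3 : nn cs (y * r) (r⁻¹ * t₀ * r) = 1 := by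
        rw [nn_mul, h2, h1, zero_add]
      exact isRightInversion_of_nn_eq_one cs htrefl h3
  have hfinA : A.Finite := finite_invR cs r
  have hfinB : Bs.Finite := (finite_invR cs y).image _
  have hinj : Function.Injective (fun t => r⁻¹ * t * r) := by
    intro a b h
    simp only at h
    have := congrArg (fun x => r * x * r⁻¹) h
    calc a = r * (r⁻¹ * a * r) * r⁻¹ := by group
    _ = r * (r⁻¹ * b * r) * r⁻¹ := by rw [this]
    _ = b := by group
  have hcard : (A ∪ Bs).ncard = ℒ r + ℒ y := by
    rw [Set.ncard_union_eq hdisj hfinA hfinB, hA, hB,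
      Set.ncard_image_of_injective _ hinj, ncard_invR, ncard_invR]
  have hge : ℒ r + ℒ y ≤ ℒ (y * r) := by
    rw [← hcard, ← ncard_invR cs (y * r)]
    exact Set.ncard_le_ncard hsub (finite_invR cs _)
  omega

lemma key (hdeg : ∀ b j : B, b ≠ j → σ b ≠ σ j) (w' : W) {I : Set B} {y : W}
    (hIne : I ≠ Set.univ)
    (huPI : y⁻¹ * w' * y ∈ PI cs I)
    (hymin : ∀ r : W, r ∈ PI cs I → ¬ ℒ (y * r) < ℒ y)
    (hlu : ℒ w' ≤ ℒ (y⁻¹ * w' * y)) :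
    ∃ J : Set B, J ≠ Set.univ ∧ w' ∈ PI cs J := by
  set u := y⁻¹ * w' * y with hu
  have hadd : ∀ r ∈ PI cs I, ℒ (y * r) = ℒ y + ℒ r :=
    fun r hr => length_mul_additive cs hymin hr
  have hw'yu : w' * y = y * u := by rw [hu]; group
  have hlen_u : ℒ u = ℒ w' := by
    have h1 : y * u * y⁻¹ = w' := by rw [hu]; group
    have h2 := cs.length_mul_ge_length_sub_length (y * u) y⁻¹
    rw [h1, cs.length_inv, hadd u huPI] at h2
    omega
  -- transport
  have htrans : ∀ t ∈ NL cs u, y * t * y⁻¹ ∈ NL cs w' := by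
    intro t ht
    have htr : cs.IsReflection t := ht.1
    have htP : t ∈ PI cs I := isLeftInversion_mem_PI cs huPI ht
    have h1 : nn cs u⁻¹ t = 1 := (mem_NL_iff cs htr).mp ht
    have hrrefl : cs.IsReflection (y * t * y⁻¹) := htr.conj y
    -- first decomposition : nn ((y*u)⁻¹) (y t y⁻¹) = 1
    have hz1 : nn cs ((y * u)⁻¹) (y * t * y⁻¹) = 1 := by
      have hd : (y * u)⁻¹ = u⁻¹ * y⁻¹ := by rw [mul_inv_rev]
      have hm := nn_mul cs u⁻¹ y⁻¹ (y * t * y⁻¹)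
      have he : y⁻¹ * (y * t * y⁻¹) * (y⁻¹)⁻¹ = t := by group
      rw [he, h1] at hm
      have hy0 : nn cs y⁻¹ (y * t * y⁻¹) = 0 := by
        rw [nn_inv_conj]
        rcases zmod2_cases (nn cs y t) with h | h
        · exact h
        exfalso
        have hinv := isRightInversion_of_nn_eq_one cs htr h
        exact hymin t htP hinv.2
      rw [hy0] at hm
      rw [hd, hm, zero_add]
    -- second decomposition
    have hz2 : nn cs ((w' * y)⁻¹) (y * t * y⁻¹)
        = nn cs w'⁻¹ (y * t * y⁻¹) + nn cs y⁻¹ (w'⁻¹ * (y * t * y⁻¹) * w') := by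
      have hd : (w' * y)⁻¹ = y⁻¹ * w'⁻¹ := by rw [mul_inv_rev]
      have hm := nn_mul cs y⁻¹ w'⁻¹ (y * t * y⁻¹)
      have he : w'⁻¹ * (y * t * y⁻¹) * (w'⁻¹)⁻¹ = w'⁻¹ * (y * t * y⁻¹) * w' := by
        rw [inv_inv]
      rw [he] at hm
      rw [hd, hm, add_comm]
    rw [hw'yu] at hz2
    rw [hz1] at hz2
    rcases zmod2_cases (nn cs w'⁻¹ (y * t * y⁻¹)) with h0 | h0
    · exfalso
      rw [h0, zero_add] at hz2
      have hq : w'⁻¹ * (y * t * y⁻¹) * w' = y * (u⁻¹ * t * u) * y⁻¹ := by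
        have hw' : w' = y * u * y⁻¹ := by rw [hu]; group
        rw [hw']; group
      rw [hq] at hz2
      have hqrefl : cs.IsReflection (y * (u⁻¹ * t * u) * y⁻¹) := by
        have h5 : cs.IsReflection (u⁻¹ * t * u) := by
          have := htr.conj u⁻¹
          rwa [inv_inv] at this
        exact h5.conj y
      have hinv := isRightInversion_of_nn_eq_one cs hqrefl hz2.symm
      -- hinv : IsRightInversion y⁻¹ (y (u⁻¹ t u) y⁻¹)
      have hlen : ℒ (y⁻¹ * (y * (u⁻¹ * t * u) * y⁻¹)) < ℒ y⁻¹ := hinv.2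
      have he2 : y⁻¹ * (y * (u⁻¹ * t * u) * y⁻¹) = (u⁻¹ * t * u) * y⁻¹ := by group
      rw [he2, cs.length_inv] at hlen
      have hlinv : ℒ ((u⁻¹ * t * u) * y⁻¹) = ℒ (y * (u⁻¹ * t * u)⁻¹) := by
        rw [← cs.length_inv]
        congr 1
        group
      rw [hlinv] at hlen
      have hmem2 : (u⁻¹ * t * u)⁻¹ ∈ PI cs I :=
        inv_mem (mul_mem (mul_mem (inv_mem huPI) htP) huPI)
      rw [hadd _ hmem2] at hlen
      have hpos : 0 < ℒ ((u⁻¹ * t * u)⁻¹) := by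
        have h5 : cs.IsReflection ((u⁻¹ * t * u)⁻¹) := by
          have h6 : cs.IsReflection (u⁻¹ * t * u) := by
            have := htr.conj u⁻¹
            rwa [inv_inv] at this
          exact h6.isReflection_inv
        obtain ⟨k, hk⟩ := h5.odd_length
        omega
      omega
    · exact (mem_NL_iff cs hrrefl).mpr h0
  -- cardinality: NL w' = y (NL u) y⁻¹
  have himg : (fun t => y * t * y⁻¹) '' NL cs u ⊆ NL cs w' := by
    rintro x ⟨t, ht, rfl⟩
    exact htrans t ht
  have hinj : Function.Injective (fun t : W => y * t * y⁻¹) := by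
    intro a b h
    simp only at h
    calc a = y⁻¹ * (y * a * y⁻¹) * y := by group
    _ = y⁻¹ * (y * b * y⁻¹) * y := by rw [h]
    _ = b := by group
  have hcard : (NL cs w').ncard ≤ ((fun t => y * t * y⁻¹) '' NL cs u).ncard := by
    rw [Set.ncard_image_of_injective _ hinj, ncard_NL, ncard_NL, hlen_u]
  have hNLeq : (fun t => y * t * y⁻¹) '' NL cs u = NL cs w' :=
    Set.eq_of_subset_of_ncard_le himg hcard (finite_NL cs w')
  -- conclusion
  set J : Set B := {i | σ i ∈ Subgroup.closure (NL cs w')} with hJ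
  have hw'J : w' ∈ PI cs J := mem_PI_support cs (ℒ w') w' le_rfl
  refine ⟨J, ?_, hw'J⟩
  intro hJu
  -- every simple lies in closure (NL w') ≤ conjugate of PI I
  set Q : Subgroup W := Subgroup.map (MulAut.conj y).toMonoidHom (PI cs I) with hQ
  have hNLQ : NL cs w' ⊆ ↑Q := by
    intro x hx
    rw [← hNLeq] at hx
    obtain ⟨t, ht, rfl⟩ := hx
    have htP : t ∈ PI cs I := isLeftInversion_mem_PI cs huPI ht
    exact ⟨t, htP, by simp [MulAut.conj_apply]⟩
  have hcl : Subgroup.closure (NL cs w') ≤ Q := (Subgroup.closure_le Q).mpr hNLQ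
  have hQtop : Q = ⊤ := by
    rw [eq_top_iff, ← cs.subgroup_closure_range_simple]
    apply (Subgroup.closure_le Q).mpr
    rintro x ⟨i, rfl⟩
    have hiJ : i ∈ J := (Set.eq_univ_iff_forall.mp hJu) i
    exact hcl hiJ
  have hPItop : ∀ x : W, x ∈ PI cs I := by
    intro x
    have hx : y * x * y⁻¹ ∈ Q := by rw [hQtop]; exact Subgroup.mem_top _
    obtain ⟨p, hp, hpe⟩ := hx
    have hpe' : y * p * y⁻¹ = y * x * y⁻¹ := by
      simpa [MulAut.conj_apply] using hpe
    have : p = x := by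
      calc p = y⁻¹ * (y * p * y⁻¹) * y := by group
      _ = y⁻¹ * (y * x * y⁻¹) * y := by rw [hpe']
      _ = x := by group
    rwa [this] at hp
  obtain ⟨b, hbI⟩ := Set.ne_univ_iff_exists_notMem I |>.mp hIne
  obtain ⟨ω, hsub, hred, hprod⟩ := exists_reduced_word_of_mem_PI cs (hPItop (σ b))
  have hlen1 : ω.length = 1 := by
    have := hred
    rw [CoxeterSystem.IsReduced, hprod, cs.length_simple] at this
    omega
  obtain ⟨j, rfl⟩ := List.length_eq_one_iff.mp hlen1
  have hsj : σ j = σ b := by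
    rw [← hprod, cs.wordProd_singleton]
  have hjb : j = b := by
    by_contra hne
    exact hdeg j b hne hsj
  exact hbI (hjb ▸ hsub j (List.mem_singleton_self j))

end CoxGP

/-- (Howlett, Geck–Pfeiffer.) In a finite Coxeter group W, if a conjugacy class C
is not elliptic (i.e. C meets some proper standard parabolic subgroup W_J, J ⊊ S),
then every element of C of minimal length in C lies in some proper standard
parabolic subgroup. -/
theorem stmt_9 {B W : Type*} [Group W] {M : CoxeterMatrix B}
    (cs : CoxeterSystem M W) [Finite W] (w : W)
    (hnotell : ∃ J : Set B, J ≠ Set.univ ∧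
      ∃ v : W, IsConj w v ∧ v ∈ Subgroup.closure (cs.simple '' J))
    (w' : W) (hconj : IsConj w w')
    (hmin : ∀ v : W, IsConj w v → cs.length w' ≤ cs.length v) :
    ∃ J : Set B, J ≠ Set.univ ∧ w' ∈ Subgroup.closure (cs.simple '' J) := by
  classical
  by_cases hdeg : ∃ b j : B, b ≠ j ∧ cs.simple b = cs.simple j
  · obtain ⟨b, j, hbj, hsbj⟩ := hdeg
    refine ⟨Set.univ \ {b}, ?_, ?_⟩
    · intro hEq
      have hb : b ∈ (Set.univ : Set B) := Set.mem_univ b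
      rw [← hEq] at hb
      simp at hb
    · have htop : Subgroup.closure (cs.simple '' (Set.univ \ {b})) = ⊤ := by
        rw [eq_top_iff, ← cs.subgroup_closure_range_simple]
        refine (Subgroup.closure_le _).mpr ?_
        rintro x ⟨k, rfl⟩
        rcases eq_or_ne k b with rfl | hk
        · rw [hsbj]
          refine Subgroup.subset_closure ⟨j, ⟨Set.mem_univ j, ?_⟩, rfl⟩
          simp only [Set.mem_singleton_iff]
          exact fun h => hbj h.symm
        · exact Subgroup.subset_closure ⟨k, ⟨Set.mem_univ k, hk⟩, rfl⟩
      rw [htop]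
      exact Subgroup.mem_top w'
  push_neg at hdeg
  obtain ⟨I₀, hI₀ne, v, hwv, hvmem⟩ := hnotell
  have hwv' : IsConj w' v := hconj.symm.trans hwv
  obtain ⟨g, hg⟩ := isConj_iff.mp hwv'
  set S : Set ℕ := {n | ∃ (I : Set B) (y : W), I ≠ Set.univ ∧ cs.length y = n ∧
      y⁻¹ * w' * y ∈ CoxGP.PI cs I} with hS
  have hSne : S.Nonempty := by
    refine ⟨cs.length g⁻¹, I₀, g⁻¹, hI₀ne, rfl, ?_⟩
    have he : (g⁻¹)⁻¹ * w' * g⁻¹ = v := by rw [inv_inv]; exact hg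
    rw [he]
    exact hvmem
  obtain ⟨I, y, hIne, hylen, huPI⟩ := Nat.sInf_mem hSne
  have hymin : ∀ r : W, r ∈ CoxGP.PI cs I → ¬ cs.length (y * r) < cs.length y := by
    intro r hr hlt
    have hmem : cs.length (y * r) ∈ S := by
      refine ⟨I, y * r, hIne, rfl, ?_⟩
      have he : (y * r)⁻¹ * w' * (y * r) = r⁻¹ * (y⁻¹ * w' * y) * r := by group
      rw [he]
      exact mul_mem (mul_mem (inv_mem hr) huPI) hr
    have := Nat.sInf_le hmem
    omega
  have hwu : IsConj w (y⁻¹ * w' * y) := by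
    refine hconj.trans (isConj_iff.mpr ⟨y⁻¹, ?_⟩)
    group
  have hlu : cs.length w' ≤ cs.length (y⁻¹ * w' * y) := hmin _ hwu
  obtain ⟨J, hJne, hJmem⟩ := CoxGP.key cs hdeg w' hIne huPI hymin hlu
  exact ⟨J, hJne, hJmem⟩
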